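/- For every financial network without default costs (α = β = 1) and without cash injections, the strategy profile in which no bank removes any incoming edge is a pure Nash equilibrium of the edge-removal game. Concretely: for every bank j and every subset R of j's incoming edges, if P denotes the maximal clearing payments of the original network and P' the maximal clearing payments of the network in which l_{ij} is set to 0 for every (i,j) ∈ R, then a_j(P') ≤ a_j(P). Consequently, the Effect of Stability of edge-removal games without default costs and without cash injections is at most 1. -/

import Mathlib

open Finset

/-- `p` is a proportional clearing payment matrix for the network with external assets `e`,
liabilities `l` and default costs `α, β`. -/
def IsClearing {ι : Type*} [Fintype ι] (α β : ℝ) (e : ι → ℝ) (l : ι → ι → ℝ)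
    (p : ι → ι → ℝ) : Prop :=
  (∀ i j, 0 ≤ p i j) ∧ (∀ i j, p i j ≤ l i j) ∧
  (∀ i, (∑ j, l i j) ≤ e i + (∑ j, p j i) → ∀ j, p i j = l i j) ∧
  (∀ i, e i + (∑ j, p j i) < (∑ j, l i j) →
    ∀ j, p i j = (α * e i + β * (∑ k, p k i)) * l i j / (∑ k, l i k))

/-- `p` is the maximal clearing payment matrix. -/
def IsMaxClearing {ι : Type*} [Fintype ι] (α β : ℝ) (e : ι → ℝ) (l p : ι → ι → ℝ) : Prop :=
  IsClearing α β e l p ∧ ∀ q, IsClearing α β e l q → ∀ i j, q i j ≤ p i j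

/-- Systemic liquidity: the sum of all payments. -/
def liquidity {ι : Type*} [Fintype ι] (p : ι → ι → ℝ) : ℝ := ∑ i, ∑ j, p i j

/-- Total assets of bank `i` under payments `p`: external assets plus incoming payments. -/
def assets {ι : Type*} [Fintype ι] (e : ι → ℝ) (p : ι → ι → ℝ) (i : ι) : ℝ :=
  e i + ∑ j, p j i

/-- The liabilities obtained from `l` when, in the edge-removal game, each bank `j`
removes the incoming edges from the banks in `s j`. -/
def removeEdges {ι : Type*} [DecidableEq ι] (l : ι → ι → ℝ) (s : ι → Finset ι) :
    ι → ι → ℝ :=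
  fun i j => if i ∈ s j then 0 else l i j

/-- Without default costs (`α = β = 1`) and without cash injections, the profile in which
no bank removes any incoming edge is a pure Nash equilibrium of the edge-removal game.
Concretely (first conjunct): for every bank `j` and every subset `R` of its incoming
edges, if `P` are the maximal clearing payments of the original network and `P'` those of
the network in which `l i j` is set to `0` for every `i ∈ R`, then
`a_j(P') ≤ a_j(P)`.  The second and third conjuncts express the consequence that the
Effect of Stability is at most 1: the no-removal profile is an equilibrium whose
liquidity is at least the liquidity of the original network. -/
lemma tarski_fixed {ι : Type*} [Fintype ι] (F : (ι → ℝ) → (ι → ℝ)) (lo hi : ι → ℝ)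
    (hmono : ∀ x y : ι → ℝ, (∀ i, lo i ≤ x i) → (∀ i, x i ≤ y i) → (∀ i, y i ≤ hi i) →
      ∀ i, F x i ≤ F y i)
    (hlo : ∀ x : ι → ℝ, (∀ i, lo i ≤ x i) → (∀ i, x i ≤ hi i) → ∀ i, lo i ≤ F x i)
    (hhi : ∀ x : ι → ℝ, (∀ i, lo i ≤ x i) → (∀ i, x i ≤ hi i) → ∀ i, F x i ≤ hi i)
    (hlh : ∀ i, lo i ≤ hi i) :
    ∃ x : ι → ℝ, (∀ i, lo i ≤ x i) ∧ (∀ i, x i ≤ hi i) ∧ F x = x := by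
  classical
  set S : Set (ι → ℝ) :=
    {x | (∀ i, lo i ≤ x i) ∧ (∀ i, x i ≤ hi i) ∧ ∀ i, x i ≤ F x i} with hS
  have hloS : lo ∈ S := ⟨fun i => le_rfl, hlh, hlo lo (fun i => le_rfl) hlh⟩
  set z : ι → ℝ := fun i => sSup ((fun x : ι → ℝ => x i) '' S) with hz
  have hbdd : ∀ i, BddAbove ((fun x : ι → ℝ => x i) '' S) := by
    intro i
    refine ⟨hi i, ?_⟩
    rintro y ⟨x, hx, rfl⟩
    exact hx.2.1 i
  have hne : ∀ i, ((fun x : ι → ℝ => x i) '' S).Nonempty := fun i => ⟨lo i, lo, hloS, rfl⟩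
  have hmemle : ∀ x ∈ S, ∀ i, x i ≤ z i := by
    intro x hx i
    exact le_csSup (hbdd i) ⟨x, hx, rfl⟩
  have hzhi : ∀ i, z i ≤ hi i := by
    intro i
    refine csSup_le (hne i) ?_
    rintro y ⟨x, hx, rfl⟩
    exact hx.2.1 i
  have hloz : ∀ i, lo i ≤ z i := hmemle lo hloS
  have hzF : ∀ i, z i ≤ F z i := by
    intro i
    refine csSup_le (hne i) ?_
    rintro y ⟨x, hx, rfl⟩
    exact le_trans (hx.2.2 i) (hmono x z hx.1 (hmemle x hx) hzhi i)
  have hFzS : F z ∈ S :=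
    ⟨hlo z hloz hzhi, hhi z hloz hzhi, hmono z (F z) hloz hzF (hhi z hloz hzhi)⟩
  refine ⟨z, hloz, hzhi, funext fun i => le_antisymm (hmemle _ hFzS i) (hzF i)⟩

lemma key {ι : Type*} [Fintype ι] [DecidableEq ι]
    (e : ι → ℝ) (he : ∀ i, 0 ≤ e i)
    (l : ι → ι → ℝ) (hl : ∀ i j, 0 ≤ l i j)
    (j : ι) (R : Finset ι) (P P' : ι → ι → ℝ)
    (hP : IsMaxClearing 1 1 e l P)
    (hP' : IsClearing 1 1 e (fun a b => if b = j ∧ a ∈ R then 0 else l a b) P') :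
    assets e P' j ≤ assets e P j := by
  classical
  set l' : ι → ι → ℝ := fun a b => if b = j ∧ a ∈ R then 0 else l a b with hl'def
  set L : ι → ℝ := fun m => ∑ k, l m k with hLdef
  set L' : ι → ℝ := fun m => ∑ k, l' m k with hL'def
  set a' : ι → ℝ := fun i => e i + ∑ m, P' m i with ha'def
  have hl'0 : ∀ m i, 0 ≤ l' m i := by
    intro m i; simp only [hl'def]; split
    · exact le_rfl
    · exact hl m i
  have hl'le : ∀ m i, l' m i ≤ l m i := by
    intro m i; simp only [hl'def]; split
    · exact hl m i
    · exact le_rfl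
  have hl'ne : ∀ m i, i ≠ j → l' m i = l m i := by
    intro m i hij; simp only [hl'def]
    rw [if_neg]; rintro ⟨h1, -⟩; exact hij h1
  have hL0 : ∀ m, 0 ≤ L m := fun m => Finset.sum_nonneg fun k _ => hl m k
  have hL'0 : ∀ m, 0 ≤ L' m := fun m => Finset.sum_nonneg fun k _ => hl'0 m k
  have hL'L : ∀ m, L' m ≤ L m := fun m => Finset.sum_le_sum fun k _ => hl'le m k
  have hP'0 : ∀ m i, 0 ≤ P' m i := hP'.1
  have hP'le : ∀ m i, P' m i ≤ l' m i := hP'.2.1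
  have ha'e : ∀ i, e i ≤ a' i := by
    intro i
    have : (0:ℝ) ≤ ∑ m, P' m i := Finset.sum_nonneg fun m _ => hP'0 m i
    simp only [ha'def]; linarith
  have ha'0 : ∀ i, 0 ≤ a' i := fun i => le_trans (he i) (ha'e i)
  have hdivnn : ∀ m i, 0 ≤ l m i / L m := fun m i => div_nonneg (hl m i) (hL0 m)
  -- value of P' entries
  have hP'val : ∀ m i, P' m i = min (a' m) (L' m) * l' m i / L' m := by
    intro m i
    rcases le_or_gt (L' m) (a' m) with h | h
    · have hsolv := hP'.2.2.1 m h i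
      rw [hsolv, min_eq_right h]
      by_cases hz : L' m = 0
      · have : l' m i = 0 := by
          have := (Finset.sum_eq_zero_iff_of_nonneg (fun k _ => hl'0 m k)).mp hz i (mem_univ i)
          exact this
        rw [this, hz]; ring
      · exact (mul_div_cancel_left₀ _ hz).symm
    · have hdef := hP'.2.2.2 m h i
      rw [hdef, min_eq_left h.le]
      simp only [one_mul, ha'def]
      rfl
  have hu_rowsum : ∀ m, ∑ i, P' m i = min (a' m) (L' m) := by
    intro m
    by_cases hz : L' m = 0
    · have hall : ∀ i, P' m i = 0 := by
        intro i
        have hli : l' m i = 0 :=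
          (Finset.sum_eq_zero_iff_of_nonneg (fun k _ => hl'0 m k)).mp hz i (mem_univ i)
        exact le_antisymm (hli ▸ hP'le m i) (hP'0 m i)
      rw [Finset.sum_eq_zero fun i _ => hall i, hz, min_eq_right (ha'0 m)]
    · calc ∑ i, P' m i = ∑ i, min (a' m) (L' m) * l' m i / L' m :=
            Finset.sum_congr rfl fun i _ => hP'val m i
        _ = min (a' m) (L' m) * (∑ i, l' m i) / L' m := by
            rw [Finset.mul_sum, Finset.sum_div]
        _ = min (a' m) (L' m) := by
            have hs : ∑ i, l' m i = L' m := rfl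
            rw [hs, mul_div_assoc, div_self hz, mul_one]
  -- the shortfall operator
  set M : ι → ℝ := fun i => a' i - e i with hMdef
  set Ft : (ι → ℝ) → (ι → ℝ) := fun t i =>
    if i = j then 0
    else max 0 (a' i - e i - ∑ m, min (a' m - t m) (L m) * l m i / L m) with hFtdef
  have hM0 : ∀ i, 0 ≤ M i := fun i => sub_nonneg.mpr (ha'e i)
  have hFtmono : ∀ x y : ι → ℝ, (∀ i, 0 ≤ x i) → (∀ i, x i ≤ y i) → (∀ i, y i ≤ M i) →
      ∀ i, Ft x i ≤ Ft y i := by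
    intro x y _ hxy _ i
    simp only [hFtdef]
    split
    · exact le_rfl
    · refine max_le_max le_rfl (sub_le_sub_left ?_ _)
      refine Finset.sum_le_sum fun m _ => ?_
      rw [mul_div_assoc, mul_div_assoc]
      refine mul_le_mul_of_nonneg_right ?_ (hdivnn m i)
      exact min_le_min (sub_le_sub_left (hxy m) _) le_rfl
  have hFtlo : ∀ x : ι → ℝ, (∀ i, 0 ≤ x i) → (∀ i, x i ≤ M i) → ∀ i, 0 ≤ Ft x i := by
    intro x _ _ i
    simp only [hFtdef]
    split
    · exact le_rfl
    · exact le_max_left _ _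
  have hFthi : ∀ x : ι → ℝ, (∀ i, 0 ≤ x i) → (∀ i, x i ≤ M i) → ∀ i, Ft x i ≤ M i := by
    intro x hx0 hxM i
    simp only [hFtdef]
    split
    · exact hM0 i
    · refine max_le (hM0 i) ?_
      have hsum : 0 ≤ ∑ m, min (a' m - x m) (L m) * l m i / L m := by
        refine Finset.sum_nonneg fun m _ => ?_
        rw [mul_div_assoc]
        refine mul_nonneg (le_min ?_ (hL0 m)) (hdivnn m i)
        have := hxM m
        simp only [hMdef] at this
        linarith [he m]
      simp only [hMdef]
      linarith
  obtain ⟨t, ht0, htM, htfix⟩ := tarski_fixed Ft (fun _ => 0) M hFtmono hFtlo hFthi hM0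
  have htj : t j = 0 := by
    conv_lhs => rw [← htfix]
    simp [hFtdef]
  set b : ι → ℝ := fun m => a' m - t m with hbdef
  set q : ι → ι → ℝ := fun m i => min (b m) (L m) * l m i / L m with hqdef
  set v : ι → ℝ := fun m => min (b m) (L m) with hvdef
  set u : ι → ℝ := fun m => min (a' m) (L' m) with hudef
  have hbe : ∀ m, e m ≤ b m := by
    intro m
    have := htM m
    simp only [hMdef] at this
    simp only [hbdef]
    linarith
  have hb0 : ∀ m, 0 ≤ b m := fun m => le_trans (he m) (hbe m)
  have hba' : ∀ m, b m ≤ a' m := by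
    intro m; simp only [hbdef]; linarith [ht0 m]
  have hv0 : ∀ m, 0 ≤ v m := fun m => le_min (hb0 m) (hL0 m)
  have hq_rowsum : ∀ m, ∑ i, q m i = v m := by
    intro m
    by_cases hz : L m = 0
    · have hall : ∀ i, l m i = 0 := fun i =>
        (Finset.sum_eq_zero_iff_of_nonneg (fun k _ => hl m k)).mp hz i (mem_univ i)
      have : ∀ i, q m i = 0 := by
        intro i; simp only [hqdef]; rw [hall i]; simp
      rw [Finset.sum_eq_zero fun i _ => this i]
      simp only [hvdef]
      rw [hz, min_eq_right (hb0 m)]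
    · simp only [hqdef, hvdef]
      rw [← Finset.sum_div, ← Finset.mul_sum]
      have hs : ∑ i, l m i = L m := rfl
      rw [hs, mul_div_assoc, div_self hz, mul_one]
  have hE : ∀ m i, i ≠ j → q m i ≤ P' m i := by
    intro m i hij
    rw [hP'val m i, hl'ne m i hij]
    by_cases hli : l m i = 0
    · simp only [hqdef]
      rw [hli]
      simp
    · have hlpos : 0 < l m i := lt_of_le_of_ne (hl m i) (Ne.symm hli)
      have hLpos : 0 < L m :=
        lt_of_lt_of_le hlpos (Finset.single_le_sum (fun k _ => hl m k) (mem_univ i))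
      have hL'pos : 0 < L' m := by
        have h1 : l m i ≤ L' m := by
          rw [← hl'ne m i hij]
          exact Finset.single_le_sum (fun k _ => hl'0 m k) (mem_univ i)
        linarith
      have hkey : v m * L' m ≤ min (a' m) (L' m) * L m := by
        have h1 : v m * L' m ≤ a' m * L m :=
          mul_le_mul (le_trans (min_le_left _ _) (hba' m)) (hL'L m) (hL'0 m) (ha'0 m)
        have h2 : v m * L' m ≤ L' m * L m := by
          have h3 : v m ≤ L m := min_le_right _ _
          calc v m * L' m ≤ L m * L' m := mul_le_mul_of_nonneg_right h3 (hL'0 m)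
            _ = L' m * L m := mul_comm _ _
        rcases min_cases (a' m) (L' m) with ⟨hmin, -⟩ | ⟨hmin, -⟩
        · rw [hmin]; exact h1
        · rw [hmin]; exact h2
      simp only [hqdef]
      rw [div_le_div_iff₀ hLpos hL'pos]
      calc min (b m) (L m) * l m i * L' m = (v m * L' m) * l m i := by
            simp only [hvdef]; ring
        _ ≤ (min (a' m) (L' m) * L m) * l m i := mul_le_mul_of_nonneg_right hkey (hl m i)
        _ = min (a' m) (L' m) * l m i * L m := by ring
  have ha'sum : ∀ i, a' i - e i = ∑ m, P' m i := by
    intro i; simp only [ha'def]; ring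
  have hT : ∀ i, i ≠ j → t i = (∑ m, P' m i) - ∑ m, q m i := by
    intro i hij
    have h1 : t i = max 0 ((∑ m, P' m i) - ∑ m, q m i) := by
      conv_lhs => rw [← htfix]
      simp only [hFtdef, if_neg hij, ha'sum i]
      rfl
    have h3 : 0 ≤ (∑ m, P' m i) - ∑ m, q m i :=
      sub_nonneg.mpr (Finset.sum_le_sum fun m _ => hE m i hij)
    rw [h1, max_eq_right h3]
  have huv : ∀ m, u m - v m ≤ t m := by
    intro m
    have h1 : u m ≤ min (a' m) (L m) := min_le_min le_rfl (hL'L m)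
    have h2 : min (a' m) (L m) - t m ≤ v m := by
      refine le_min ?_ ?_
      · have := min_le_left (a' m) (L m)
        simp only [hbdef]; linarith
      · have := min_le_right (a' m) (L m)
        linarith [ht0 m]
    linarith
  have hcolj : ∑ m, P' m j ≤ ∑ m, q m j := by
    have hswap1 : ∑ i, ∑ m, P' m i = ∑ m, u m := by
      rw [Finset.sum_comm]
      exact Finset.sum_congr rfl fun m _ => hu_rowsum m
    have hswap2 : ∑ i, ∑ m, q m i = ∑ m, v m := by
      rw [Finset.sum_comm]
      exact Finset.sum_congr rfl fun m _ => hq_rowsum m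
    have hkey : ∑ i, ((∑ m, P' m i) - ∑ m, q m i) = ∑ m, (u m - v m) := by
      rw [Finset.sum_sub_distrib, hswap1, hswap2, Finset.sum_sub_distrib]
    have hsplit : ∑ i, ((∑ m, P' m i) - ∑ m, q m i)
        = ((∑ m, P' m j) - ∑ m, q m j) + ∑ i ∈ univ.erase j, t i := by
      rw [← Finset.add_sum_erase _ _ (mem_univ j)]
      congr 1
      exact Finset.sum_congr rfl fun i hi => (hT i (Finset.ne_of_mem_erase hi)).symm
    have hterase : ∑ i ∈ univ.erase j, t i = ∑ i, t i := by
      rw [← Finset.add_sum_erase _ t (mem_univ j), htj, zero_add]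
    have hub : ∑ m, (u m - v m) ≤ ∑ m, t m := Finset.sum_le_sum fun m _ => huv m
    have := hsplit.symm.trans hkey
    rw [hterase] at this
    linarith
  -- b is a pre-fixed point of the asset operator for the original network
  have hbpre : ∀ i, b i ≤ e i + ∑ m, q m i := by
    intro i
    by_cases hij : i = j
    · subst hij
      have h1 : b i = a' i := by simp only [hbdef]; rw [htj]; ring
      have h2 : a' i = e i + ∑ m, P' m i := rfl
      linarith
    · have h1 := hT i hij
      have h2 := ha'sum i
      simp only [hbdef]
      linarith
  -- second Tarski application: asset operator for the original network
  set A : (ι → ℝ) → (ι → ℝ) := fun x i => e i + ∑ m, min (x m) (L m) * l m i / L m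
    with hAdef
  set hi' : ι → ℝ := fun i => e i + ∑ m, l m i with hhi'def
  have hterm_le : ∀ (x : ι → ℝ) m i, 0 ≤ x m → min (x m) (L m) * l m i / L m ≤ l m i := by
    intro x m i hx0
    by_cases hz : L m = 0
    · have hli : l m i = 0 :=
        (Finset.sum_eq_zero_iff_of_nonneg (fun k _ => hl m k)).mp hz i (mem_univ i)
      rw [hli]; simp
    · have hLpos : 0 < L m := lt_of_le_of_ne (hL0 m) (Ne.symm hz)
      rw [div_le_iff₀ hLpos, mul_comm (l m i) (L m)]
      exact mul_le_mul_of_nonneg_right (min_le_right _ _) (hl m i)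
  have hAmono : ∀ x y : ι → ℝ, (∀ i, b i ≤ x i) → (∀ i, x i ≤ y i) → (∀ i, y i ≤ hi' i) →
      ∀ i, A x i ≤ A y i := by
    intro x y _ hxy _ i
    simp only [hAdef]
    refine add_le_add le_rfl (Finset.sum_le_sum fun m _ => ?_)
    rw [mul_div_assoc, mul_div_assoc]
    exact mul_le_mul_of_nonneg_right (min_le_min (hxy m) le_rfl) (hdivnn m i)
  have hAb : ∀ i, b i ≤ A b i := by
    intro i
    simp only [hAdef]
    exact hbpre i
  have hAlo : ∀ x : ι → ℝ, (∀ i, b i ≤ x i) → (∀ i, x i ≤ hi' i) → ∀ i, b i ≤ A x i := by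
    intro x hbx hxhi i
    exact le_trans (hAb i) (hAmono b x (fun k => le_rfl) hbx hxhi i)
  have hAhi : ∀ x : ι → ℝ, (∀ i, b i ≤ x i) → (∀ i, x i ≤ hi' i) → ∀ i, A x i ≤ hi' i := by
    intro x hbx _ i
    simp only [hAdef, hhi'def]
    refine add_le_add le_rfl (Finset.sum_le_sum fun m _ => ?_)
    exact hterm_le x m i (le_trans (hb0 m) (hbx m))
  have hbhi : ∀ i, b i ≤ hi' i := by
    intro i
    have h1 : b i ≤ a' i := hba' i
    have h2 : ∑ m, P' m i ≤ ∑ m, l m i :=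
      Finset.sum_le_sum fun m _ => le_trans (hP'le m i) (hl'le m i)
    have h3 : a' i = e i + ∑ m, P' m i := rfl
    simp only [hhi'def]
    linarith
  obtain ⟨as, hbas, hashi, hAfix⟩ := tarski_fixed A b hi' hAmono hAlo hAhi hbhi
  have has0 : ∀ m, 0 ≤ as m := fun m => le_trans (hb0 m) (hbas m)
  set pst : ι → ι → ℝ := fun m i => min (as m) (L m) * l m i / L m with hpstdef
  have hasum : ∀ i, e i + ∑ m, pst m i = as i := fun i => congrFun hAfix i
  have hclear : IsClearing 1 1 e l pst := by
    refine ⟨?_, ?_, ?_, ?_⟩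
    · intro m i
      simp only [hpstdef]
      exact div_nonneg (mul_nonneg (le_min (has0 m) (hL0 m)) (hl m i)) (hL0 m)
    · intro m i
      exact hterm_le as m i (has0 m)
    · intro i hsolv k
      have hLas : L i ≤ as i := by
        have := hasum i
        simp only [hLdef]
        linarith [hsolv]
      by_cases hz : L i = 0
      · have hli : l i k = 0 :=
          (Finset.sum_eq_zero_iff_of_nonneg (fun m _ => hl i m)).mp hz k (mem_univ k)
        simp only [hpstdef]
        rw [hli, hz]
        simp
      · simp only [hpstdef]
        rw [min_eq_right hLas]
        exact mul_div_cancel_left₀ _ hz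
    · intro i hdef k
      have hasL : as i < L i := by
        have := hasum i
        simp only [hLdef]
        linarith [hdef]
      simp only [one_mul]
      have h1 : e i + ∑ m, pst m i = as i := hasum i
      have h2 : (∑ m, l i m) = L i := rfl
      rw [h1, h2]
      simp only [hpstdef]
      rw [min_eq_left hasL.le]
  have hple : ∀ m k, pst m k ≤ P m k := hP.2 pst hclear
  have hfinal1 : as j = e j + ∑ m, pst m j := (hasum j).symm
  have hfinal2 : ∑ m, pst m j ≤ ∑ m, P m j := Finset.sum_le_sum fun m _ => hple m j
  have hbj : b j = a' j := by simp only [hbdef]; rw [htj]; ring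
  have h5 : assets e P' j = a' j := rfl
  have h6 : assets e P j = e j + ∑ m, P m j := rfl
  rw [h5, h6, ← hbj]
  calc b j ≤ as j := hbas j
    _ = e j + ∑ m, pst m j := hfinal1
    _ ≤ e j + ∑ m, P m j := by linarith

theorem no_removal_is_NE_no_default_costs
    (ι : Type*) [Fintype ι] [DecidableEq ι]
    (e : ι → ℝ) (he : ∀ i, 0 ≤ e i)
    (l : ι → ι → ℝ) (hl : ∀ i j, 0 ≤ l i j) (hdiag : ∀ i, l i i = 0)
    (Pay : (ι → Finset ι) → ι → ι → ℝ)
    (hPay : ∀ s, IsMaxClearing 1 1 e (removeEdges l s) (Pay s)) :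
    -- no bank benefits from removing any subset of its incoming edges
    (∀ (j : ι) (R : Finset ι) (P P' : ι → ι → ℝ),
      IsMaxClearing 1 1 e l P →
      IsMaxClearing 1 1 e (fun a b => if b = j ∧ a ∈ R then 0 else l a b) P' →
      assets e P' j ≤ assets e P j)
    -- hence the no-removal profile is a pure Nash equilibrium
    ∧ (∀ (j : ι) (R : Finset ι),
        assets e (Pay (Function.update (fun _ => (∅ : Finset ι)) j R)) j
          ≤ assets e (Pay (fun _ => (∅ : Finset ι))) j)
    -- whose liquidity equals that of the original network: Effect of Stability ≤ 1
    ∧ (∀ P, IsMaxClearing 1 1 e l P →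
        liquidity P ≤ liquidity (Pay (fun _ => (∅ : Finset ι)))) := by
  classical
  have main : ∀ (j : ι) (R : Finset ι) (P P' : ι → ι → ℝ),
      IsMaxClearing 1 1 e l P →
      IsMaxClearing 1 1 e (fun a b => if b = j ∧ a ∈ R then 0 else l a b) P' →
      assets e P' j ≤ assets e P j :=
    fun j R P P' hP hP' => key e he l hl j R P P' hP hP'.1
  have h0 : removeEdges l (fun _ => (∅ : Finset ι)) = l := by
    funext i k; simp [removeEdges]
  refine ⟨main, ?_, ?_⟩
  · intro j R
    have h1 : removeEdges l (Function.update (fun _ => (∅ : Finset ι)) j R)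
        = fun a b => if b = j ∧ a ∈ R then 0 else l a b := by
      funext a b
      by_cases hb : b = j
      · subst hb
        simp [removeEdges, Function.update_self]
      · simp [removeEdges, Function.update_of_ne hb, hb]
    have hA := hPay (fun _ => (∅ : Finset ι))
    rw [h0] at hA
    have hB := hPay (Function.update (fun _ => (∅ : Finset ι)) j R)
    rw [h1] at hB
    exact main j R _ _ hA hB
  · intro P hP
    have hA := hPay (fun _ => (∅ : Finset ι))
    rw [h0] at hA
    exact Finset.sum_le_sum fun i _ => Finset.sum_le_sum fun k _ => hA.2 P hP.1 i k
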